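/- Let ξ be a real irrational number. Then τ(ξ) = 0 if and only if ξ is a Liouville number, where τ(ξ) = sup T(ξ) (with sup ∅ = 0) and T(ξ) is the set of all τ > 0 for which there exist integer sequences (u_n), (v_n) with u_n ≠ 0 for all n, u_n ξ − v_n → 0, |u_{n+1} ξ − v_{n+1}| = |u_n ξ − v_n|^{1+o(1)}, and |u_n ξ − v_n| ≤ |u_n|^{−τ+o(1)}. -/

import Mathlib

open Filter Topology

/-- The irrationality exponent of a real number, as an extended real:
the infimum of all real `μ` such that `|ξ - p/q| > 1/q^μ` for all integers `p, q`
with `q` sufficiently large (`⊤` if no such real `μ` exists). -/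
noncomputable def irrationalityExponent (ξ : ℝ) : EReal :=
  sInf {x : EReal | ∃ μ : ℝ, x = (μ : EReal) ∧
    ∀ᶠ q : ℕ in atTop, ∀ p : ℤ, |ξ - (p : ℝ) / (q : ℝ)| > 1 / (q : ℝ) ^ μ}

/-- The set `T(ξ)` of all `τ > 0` for which there exist integer sequences `(u_n)`, `(v_n)`
with `u_n ≠ 0`, `u_n ξ - v_n → 0`, `|u_{n+1} ξ - v_{n+1}| = |u_n ξ - v_n|^{1+o(1)}` and
`|u_n ξ - v_n| ≤ |u_n|^{-τ+o(1)}`. -/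
def TSet (ξ : ℝ) : Set ℝ :=
  {τ : ℝ | 0 < τ ∧ ∃ u v : ℕ → ℤ, (∀ n, u n ≠ 0) ∧
    Tendsto (fun n => (u n : ℝ) * ξ - (v n : ℝ)) atTop (𝓝 0) ∧
    (∃ δ : ℕ → ℝ, Tendsto δ atTop (𝓝 0) ∧ ∀ n,
      |(u (n + 1) : ℝ) * ξ - (v (n + 1) : ℝ)| = |(u n : ℝ) * ξ - (v n : ℝ)| ^ (1 + δ n)) ∧
    (∃ δ : ℕ → ℝ, Tendsto δ atTop (𝓝 0) ∧ ∀ n,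
      |(u n : ℝ) * ξ - (v n : ℝ)| ≤ |(u n : ℝ)| ^ (-τ + δ n))}

/-- The set `T'(ξ)` of all `τ > 0` for which there exist integer sequences `(u_n)`, `(v_n)`
and `0 < α < 1 < β` with `|u_n ξ - v_n|^{1/n} → α`, `limsup |u_n|^{1/n} ≤ β` and
`τ = -log α / log β`. -/
def TSet' (ξ : ℝ) : Set ℝ :=
  {τ : ℝ | 0 < τ ∧ ∃ u v : ℕ → ℤ, ∃ α β : ℝ, 0 < α ∧ α < 1 ∧ 1 < β ∧
    Tendsto (fun n => |(u n : ℝ) * ξ - (v n : ℝ)| ^ (1 / (n : ℝ))) atTop (𝓝 α) ∧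
    limsup (fun n => ((|(u n : ℝ)| ^ (1 / (n : ℝ)) : ℝ) : EReal)) atTop ≤ (β : EReal) ∧
    τ = -Real.log α / Real.log β}

/-- The set `T''(ξ)` of all `τ > 0` such that, for any increasing sequence `(Q_n)` of
positive integers, there exist integer sequences `(u_n)`, `(v_n)` with
`|u_n| ≤ Q_n^{1+o(1)}` and `|u_n ξ - v_n| = Q_n^{-τ+o(1)}`. -/
def TSet'' (ξ : ℝ) : Set ℝ :=
  {τ : ℝ | 0 < τ ∧ ∀ Q : ℕ → ℕ, StrictMono Q → (∀ n, 0 < Q n) →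
    ∃ u v : ℕ → ℤ,
      (∃ δ : ℕ → ℝ, Tendsto δ atTop (𝓝 0) ∧ ∀ n,
        |(u n : ℝ)| ≤ (Q n : ℝ) ^ (1 + δ n)) ∧
      (∃ δ : ℕ → ℝ, Tendsto δ atTop (𝓝 0) ∧ ∀ n,
        |(u n : ℝ) * ξ - (v n : ℝ)| = (Q n : ℝ) ^ (-τ + δ n))}

/-- The set `T'''(ξ)` of all `τ > 0` such that, for any sequences `(Q_n)`, `(ε_n)` of
positive real numbers with `Q_n → ∞`, `ε_n → 0` and `ε_n ≥ Q_n^{-τ+o(1)}`, there exist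
integer sequences `(u_n)`, `(v_n)` with `u_n / Q_n → 1` and `(u_n ξ - v_n)/ε_n → 1`. -/
def TSet''' (ξ : ℝ) : Set ℝ :=
  {τ : ℝ | 0 < τ ∧ ∀ Q ε : ℕ → ℝ, (∀ n, 0 < Q n) → (∀ n, 0 < ε n) →
    Tendsto Q atTop atTop → Tendsto ε atTop (𝓝 0) →
    (∃ δ : ℕ → ℝ, Tendsto δ atTop (𝓝 0) ∧ ∀ n, ε n ≥ Q n ^ (-τ + δ n)) →
    ∃ u v : ℕ → ℤ,
      Tendsto (fun n => (u n : ℝ) / Q n) atTop (𝓝 1) ∧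
      Tendsto (fun n => ((u n : ℝ) * ξ - (v n : ℝ)) / ε n) atTop (𝓝 1)}

/-- `τ(ξ) = sup T(ξ)` (with `sup ∅ = 0`, as for the real `sSup`). -/
noncomputable def tauExp (ξ : ℝ) : ℝ := sSup (TSet ξ)

/-- `τ'(ξ) = sup T'(ξ)` (with `sup ∅ = 0`, as for the real `sSup`). -/
noncomputable def tauExp' (ξ : ℝ) : ℝ := sSup (TSet' ξ)

/-- `τ''(ξ) = sup T''(ξ)` (with `sup ∅ = 0`, as for the real `sSup`). -/
noncomputable def tauExp'' (ξ : ℝ) : ℝ := sSup (TSet'' ξ)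

/-- `τ'''(ξ) = sup T'''(ξ)` (with `sup ∅ = 0`, as for the real `sSup`). -/
noncomputable def tauExp''' (ξ : ℝ) : ℝ := sSup (TSet''' ξ)

lemma aux_pos (ξ : ℝ) (hξ : Irrational ξ) {u : ℤ} (hu : u ≠ 0) (v : ℤ) :
    0 < |(u:ℝ) * ξ - (v:ℝ)| := by
  rw [abs_pos, sub_ne_zero]
  exact (hξ.intCast_mul hu).ne_int v

lemma aux_abs_tendsto (ξ : ℝ) (hξ : Irrational ξ) (w r : ℕ → ℤ) (hw : ∀ n, w n ≠ 0)
    (h : Tendsto (fun n => |(w n : ℝ) * ξ - (r n : ℝ)|) atTop (𝓝 0)) (B : ℤ) :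
    ∀ᶠ n in atTop, B ≤ |w n| := by
  rcases le_or_gt B 0 with hB | hB
  · exact Eventually.of_forall fun n => hB.trans (abs_nonneg _)
  · have hne : ((Finset.Icc (-B) B).erase 0).Nonempty := by
      refine ⟨1, Finset.mem_erase.mpr ⟨one_ne_zero, Finset.mem_Icc.mpr ⟨by omega, hB⟩⟩⟩
    set F := (Finset.Icc (-B) B).erase 0
    set c := F.inf' hne (fun z => |(z:ℝ) * ξ - (round ((z:ℝ) * ξ) : ℤ)|) with hc
    have hcpos : 0 < c := by
      rw [hc, Finset.lt_inf'_iff]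
      intro z hz
      exact aux_pos ξ hξ (Finset.ne_of_mem_erase hz) _
    filter_upwards [h.eventually (eventually_lt_nhds hcpos)] with n hn
    by_contra hcon
    push_neg at hcon
    have hmem : w n ∈ F := by
      refine Finset.mem_erase.mpr ⟨hw n, Finset.mem_Icc.mpr ⟨?_, ?_⟩⟩ <;>
        · have := abs_le.mp hcon.le
          omega
    have h1 : c ≤ |(w n : ℝ) * ξ - (round ((w n : ℝ) * ξ) : ℤ)| :=
      Finset.inf'_le _ hmem
    have h2 : |(w n : ℝ) * ξ - (round ((w n : ℝ) * ξ) : ℤ)| ≤ |(w n : ℝ) * ξ - (r n : ℝ)| :=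
      round_le ((w n : ℝ) * ξ) (r n)
    linarith

lemma aux_step (ξ : ℝ) (hξ : Irrational ξ) (t : ℝ) (ht : 0 < t) (ht2 : t ≤ 1/2) :
    ∃ q u v : ℤ, 0 < q ∧ q ≤ u ∧ (q:ℝ) ≤ 2/t ∧
      0 < |(q:ℝ)*ξ - ((round ((q:ℝ)*ξ) : ℤ):ℝ)| ∧
      |(q:ℝ)*ξ - ((round ((q:ℝ)*ξ) : ℤ):ℝ)| ≤ t ∧
      t/2 ≤ |(u:ℝ)*ξ - (v:ℝ)| ∧ |(u:ℝ)*ξ - (v:ℝ)| ≤ t ∧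
      (u:ℝ) * |(q:ℝ)*ξ - ((round ((q:ℝ)*ξ) : ℤ):ℝ)| ≤ t * q := by
  have h1t : 2 ≤ 1/t := by rw [le_div_iff₀ ht]; linarith
  set N : ℕ := ⌈1/t⌉₊ with hN
  have hN1 : 1 ≤ N := by
    exact_mod_cast Nat.one_le_ceil_iff.mpr (by linarith)
  have hNt : (N:ℝ) ≤ 2/t := by
    have h2 : (N:ℝ) < 1/t + 1 := Nat.ceil_lt_add_one (by positivity)
    have : 1/t + 1 ≤ 2/t := by
      rw [div_add' _ _ _ ht.ne', div_le_div_iff₀ ht ht]; nlinarith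
    linarith
  obtain ⟨j, k, hk0, hkN, hjk⟩ := Real.exists_int_int_abs_mul_sub_le ξ (show 0 < N by omega)
  have hinv : 1/((N:ℝ)+1) ≤ t := by
    rw [div_le_iff₀ (by positivity)]
    have : 1/t ≤ (N:ℝ) := Nat.le_ceil _
    calc (1:ℝ) = t * (1/t) := by field_simp
    _ ≤ t * ((N:ℝ)+1) := by nlinarith
  set p : ℤ := round ((k:ℝ)*ξ) with hp
  set d : ℝ := |(k:ℝ)*ξ - (p:ℝ)| with hd
  have hdpos : 0 < d := aux_pos ξ hξ (by omega) p
  have hdt : d ≤ t := le_trans (round_le ((k:ℝ)*ξ) j) (le_trans hjk hinv)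
  set m : ℤ := ⌊t/d⌋ with hm
  have hm1 : 1 ≤ m := by
    rw [hm, Int.le_floor]
    push_cast
    rw [le_div_iff₀ hdpos]; linarith
  have hm1' : (1:ℝ) ≤ (m:ℝ) := by exact_mod_cast hm1
  have hmle : (m:ℝ) ≤ t/d := Int.floor_le _
  have hmgt : t/d - 1 < (m:ℝ) := by
    have := Int.lt_floor_add_one (t/d); linarith
  have hdd : (t/d) * d = t := div_mul_cancel₀ t hdpos.ne'
  have hmdle : (m:ℝ) * d ≤ t := by nlinarith [mul_le_mul_of_nonneg_right hmle hdpos.le]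
  have hmdge : t/2 ≤ (m:ℝ) * d := by
    rcases le_or_gt d (t/2) with hc | hc
    · nlinarith [mul_lt_mul_of_pos_right hmgt hdpos]
    · nlinarith
  have key : |((m*k:ℤ):ℝ)*ξ - ((m*p:ℤ):ℝ)| = (m:ℝ) * d := by
    push_cast
    rw [show (m:ℝ)*(k:ℝ)*ξ - (m:ℝ)*(p:ℝ) = (m:ℝ)*((k:ℝ)*ξ - (p:ℝ)) by ring, abs_mul,
      abs_of_pos (by linarith : (0:ℝ) < (m:ℝ)), hd]
  have hk0' : (0:ℝ) < (k:ℝ) := by exact_mod_cast hk0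
  refine ⟨k, m*k, m*p, hk0, by nlinarith, ?_, hdpos, hdt, by rw [key]; exact hmdge,
    by rw [key]; exact hmdle, ?_⟩
  · calc (k:ℝ) ≤ N := by exact_mod_cast hkN
      _ ≤ 2/t := hNt
  · push_cast
    calc (m:ℝ) * (k:ℝ) * d = ((m:ℝ) * d) * k := by ring
      _ ≤ t * k := by nlinarith

lemma aux_ratio (u v : ℤ) (hu : u ≠ 0) :
    ∃ p : ℤ, (p:ℝ)/((u.natAbs : ℕ):ℝ) = (v:ℝ)/(u:ℝ) := by
  rcases lt_or_gt_of_ne hu with h | h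
  · refine ⟨-v, ?_⟩
    have : ((u.natAbs : ℕ):ℝ) = -(u:ℝ) := by
      rw [Nat.cast_natAbs]
      push_cast
      rw [abs_of_neg (by exact_mod_cast h)]
    rw [this]
    push_cast
    exact neg_div_neg_eq _ _
  · refine ⟨v, ?_⟩
    have : ((u.natAbs : ℕ):ℝ) = (u:ℝ) := by
      rw [Nat.cast_natAbs]
      push_cast
      rw [abs_of_pos (by exact_mod_cast h)]
    rw [this]

lemma aux_mem_TSet (ξ : ℝ) (hξ : Irrational ξ) (μ : ℝ) (hμ2 : 2 ≤ μ) (Q₀ : ℕ)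
    (hev : ∀ q : ℕ, Q₀ ≤ q → ∀ p : ℤ, |ξ - (p:ℝ)/(q:ℝ)| > 1/(q:ℝ)^μ) :
    (1/(2*(μ-1))) ∈ TSet ξ := by
  have hμ1 : (0:ℝ) < μ - 1 := by linarith
  set τ : ℝ := 1/(2*(μ-1)) with hτdef
  have hτpos : 0 < τ := by rw [hτdef]; positivity
  have hτμ : τ * (μ - 1) = 1/2 := by rw [hτdef]; field_simp
  set t : ℕ → ℝ := fun n => Real.exp (-(n:ℝ)-1) with htdef
  have htpos : ∀ n, 0 < t n := fun n => Real.exp_pos _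
  have hthalf : ∀ n, t n ≤ 1/2 := by
    intro n
    have h1 : t n ≤ Real.exp (-1) := by
      rw [htdef]
      exact Real.exp_le_exp.mpr (by push_cast; linarith [Nat.cast_nonneg (α := ℝ) n])
    have h2 : Real.exp (-1) ≤ 1/2 := by
      rw [Real.exp_neg, inv_le_comm₀ (Real.exp_pos 1) (by norm_num)]
      norm_num
      linarith [Real.add_one_le_exp 1]
    linarith
  have ht0 : Tendsto t atTop (𝓝 0) := by
    rw [htdef]
    apply Real.tendsto_exp_atBot.comp
    apply Filter.tendsto_atBot_add_const_right _ (-1)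
    exact tendsto_neg_atBot_iff.mpr tendsto_natCast_atTop_atTop
  have hlogt : ∀ n, Real.log (t n) = -(n:ℝ)-1 := fun n => Real.log_exp _
  choose q u v hq0 hqu hqle hd0 hdle hL1 hL2 hud using
    fun n => aux_step ξ hξ (t n) (htpos n) (hthalf n)
  set p : ℕ → ℤ := fun n => round ((q n : ℝ) * ξ) with hpdef
  set d : ℕ → ℝ := fun n => |(q n : ℝ)*ξ - (p n : ℝ)| with hddef
  set L : ℕ → ℝ := fun n => |(u n : ℝ)*ξ - (v n : ℝ)| with hLdef
  have hu0 : ∀ n, u n ≠ 0 := fun n => by have := lt_of_lt_of_le (hq0 n) (hqu n); omega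
  have hupos : ∀ n, (0:ℝ) < (u n : ℝ) := fun n => by
    exact_mod_cast lt_of_lt_of_le (hq0 n) (hqu n)
  have hqpos : ∀ n, (0:ℝ) < (q n : ℝ) := fun n => by exact_mod_cast hq0 n
  have hLpos : ∀ n, 0 < L n := fun n => aux_pos ξ hξ (hu0 n) (v n)
  have hLlt1 : ∀ n, L n < 1 := fun n => lt_of_le_of_lt (hL2 n) (by linarith [hthalf n])
  have hlogL_ub : ∀ n, Real.log (L n) ≤ -(n:ℝ)-1 := by
    intro n
    rw [← hlogt n]
    exact Real.log_le_log (hLpos n) (hL2 n)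
  have hlogL_lb : ∀ n : ℕ, -(n:ℝ)-1-Real.log 2 ≤ Real.log (L n) := by
    intro n
    have h := Real.log_le_log (by positivity) (hL1 n)
    rwa [Real.log_div (htpos n).ne' (by norm_num), hlogt n] at h
  have hlogL_neg : ∀ n, Real.log (L n) < 0 := fun n =>
    Real.log_neg (hLpos n) (hLlt1 n)
  refine ⟨hτpos, u, v, hu0, ?_, ?_, ?_⟩
  · rw [tendsto_zero_iff_norm_tendsto_zero]
    exact squeeze_zero (fun n => norm_nonneg _) (fun n => by simpa using hL2 n) ht0
  · refine ⟨fun n => Real.log (L (n+1)) / Real.log (L n) - 1, ?_, ?_⟩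
    · have hdiv : Tendsto (fun n : ℕ => (2 + 2*Real.log 2)/((n:ℝ)+1)) atTop (𝓝 0) :=
        tendsto_const_nhds.div_atTop
          (tendsto_atTop_add_const_right _ 1 tendsto_natCast_atTop_atTop)
      apply squeeze_zero_norm _ hdiv
      intro n
      have hlog2 : 0 ≤ Real.log 2 := Real.log_nonneg (by norm_num)
      have ha := hlogL_lb (n+1)
      have hb := hlogL_ub (n+1)
      have hc := hlogL_lb n
      have hdd := hlogL_ub n
      push_cast at ha hb
      have hden : (n:ℝ)+1 ≤ |Real.log (L n)| := by
        rw [abs_of_neg (hlogL_neg n)]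
        linarith
      have hnum : |Real.log (L (n+1)) - Real.log (L n)| ≤ 2 + 2*Real.log 2 := by
        rw [abs_le]
        constructor
        · linarith
        · linarith
      have heq : Real.log (L (n+1)) / Real.log (L n) - 1
          = (Real.log (L (n+1)) - Real.log (L n)) / Real.log (L n) :=
        div_sub_one (hlogL_neg n).ne
      rw [Real.norm_eq_abs, heq, abs_div]
      exact div_le_div₀ (by linarith) hnum (by positivity) hden
    · intro n
      have hln : Real.log (L n) ≠ 0 := (hlogL_neg n).ne
      show L (n+1) = L n ^ (1 + (Real.log (L (n+1)) / Real.log (L n) - 1))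
      have h1 : (1 + (Real.log (L (n+1)) / Real.log (L n) - 1))
          = Real.log (L (n+1)) / Real.log (L n) := by ring
      rw [h1, Real.rpow_def_of_pos (hLpos n), mul_comm, div_mul_cancel₀ _ hln,
        Real.exp_log (hLpos (n+1))]
  · refine ⟨fun n => if L n ≤ |(u n : ℝ)| ^ (-τ) then 0 else τ, ?_, ?_⟩
    · have hdt0 : Tendsto (fun n => |(q n : ℝ) * ξ - (p n : ℝ)|) atTop (𝓝 0) :=
        squeeze_zero (fun n => abs_nonneg _) (fun n => hdle n) ht0
      have hqbig : ∀ᶠ n in atTop, (Q₀:ℤ) ≤ |q n| :=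
        aux_abs_tendsto ξ hξ q p (fun n => (hq0 n).ne') hdt0 (Q₀:ℤ)
      have hnum : ∀ᶠ n : ℕ in atTop, τ * μ * Real.log 2 ≤ ((n:ℝ)+1)/2 := by
        have h1 : Tendsto (fun n : ℕ => ((n:ℝ)+1)/2) atTop atTop := by
          apply Tendsto.atTop_div_const (by norm_num : (0:ℝ) < 2)
          exact tendsto_atTop_add_const_right _ 1 tendsto_natCast_atTop_atTop
        exact h1.eventually_ge_atTop _
      have hev2 : ∀ᶠ n in atTop, L n ≤ |(u n : ℝ)| ^ (-τ) := by
        filter_upwards [hqbig, hnum] with n hQ hnum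
        -- apply the diophantine lower bound at q n
        set Q : ℕ := (q n).toNat with hQdef
        have hQcast : ((Q:ℕ):ℝ) = ((q n : ℤ):ℝ) := by
          rw [hQdef]; exact_mod_cast congrArg (Int.cast : ℤ → ℝ) (Int.toNat_of_nonneg (hq0 n).le)
        have hQ0 : Q₀ ≤ Q := by
          rw [abs_of_pos (hq0 n)] at hQ; omega
        have hp := hev Q hQ0 (p n)
        rw [hQcast] at hp
        have hd_eq : |ξ - (p n : ℝ)/(q n : ℝ)| = d n / (q n : ℝ) := by
          show _ = |(q n : ℝ)*ξ - (p n : ℝ)| / (q n : ℝ)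
          rw [show ξ - (p n : ℝ)/(q n : ℝ) = ((q n : ℝ)*ξ - (p n : ℝ))/(q n : ℝ) from by
            rw [eq_div_iff (hqpos n).ne', sub_mul, div_mul_cancel₀ _ (hqpos n).ne']; ring,
            abs_div, abs_of_pos (hqpos n)]
        rw [hd_eq] at hp
        -- d n > (q n)^(1-μ)
        have hd_gt : ((q n : ℝ)) ^ (1-μ) < d n := by
          have h1 : (1:ℝ)/(q n : ℝ)^μ = (q n : ℝ) ^ (-μ) := by
            rw [Real.rpow_neg (hqpos n).le, one_div]
          rw [h1] at hp
          have h2 : (q n : ℝ) * (q n : ℝ) ^ (-μ) < (q n : ℝ) * (d n / (q n : ℝ)) :=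
            mul_lt_mul_of_pos_left hp (hqpos n)
          rw [mul_div_cancel₀ _ (hqpos n).ne'] at h2
          calc ((q n : ℝ)) ^ (1-μ) = (q n : ℝ) ^ (1:ℝ) * (q n : ℝ) ^ (-μ) := by
                rw [← Real.rpow_add (hqpos n)]; ring_nf
            _ = (q n : ℝ) * (q n : ℝ) ^ (-μ) := by rw [Real.rpow_one]
            _ < d n := h2
        -- u n < t n * (q n)^μ
        have hu_lt : (u n : ℝ) < t n * (q n : ℝ) ^ μ := by
          have h1 : (u n : ℝ) * (q n : ℝ) ^ (1-μ) < t n * (q n : ℝ) :=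
            lt_of_lt_of_le (mul_lt_mul_of_pos_left hd_gt (hupos n)) (hud n)
          have h2 : (t n * (q n : ℝ) ^ μ) * (q n : ℝ) ^ (1-μ) = t n * (q n : ℝ) := by
            rw [mul_assoc, ← Real.rpow_add (hqpos n)]
            norm_num
          rw [← h2] at h1
          exact lt_of_mul_lt_mul_right h1 (Real.rpow_pos_of_pos (hqpos n) _).le
        -- log bound on u n
        have hlogu : Real.log (u n : ℝ) < -(n:ℝ)-1 + μ*(Real.log 2 + (n:ℝ) + 1) := by
          have h1 : Real.log (u n : ℝ) < Real.log (t n * (q n : ℝ) ^ μ) :=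
            Real.log_lt_log (hupos n) hu_lt
          rw [Real.log_mul (htpos n).ne' (Real.rpow_pos_of_pos (hqpos n) _).ne',
            Real.log_rpow (hqpos n), hlogt n] at h1
          have h2 : Real.log (q n : ℝ) ≤ Real.log 2 + (n:ℝ) + 1 := by
            have h3 : Real.log (q n : ℝ) ≤ Real.log (2 / t n) :=
              Real.log_le_log (hqpos n) (hqle n)
            rwa [Real.log_div (by norm_num) (htpos n).ne', hlogt n,
              show Real.log 2 - (-(n:ℝ)-1) = Real.log 2 + (n:ℝ)+1 by ring] at h3
          nlinarith [hμ2]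
        -- conclude
        show L n ≤ |(u n : ℝ)| ^ (-τ)
        rw [abs_of_pos (hupos n), Real.rpow_def_of_pos (hupos n),
          ← Real.exp_log (hLpos n), Real.exp_le_exp]
        have h4 : τ * Real.log (u n : ℝ) ≤ τ * (-(n:ℝ)-1 + μ*(Real.log 2 + (n:ℝ) + 1)) :=
          mul_le_mul_of_nonneg_left hlogu.le hτpos.le
        have h5 : τ * (-(n:ℝ)-1 + μ*(Real.log 2 + (n:ℝ) + 1))
            = τ*(μ-1)*((n:ℝ)+1) + τ*μ*Real.log 2 := by ring
        rw [h5, hτμ] at h4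
        have h6 : τ * Real.log (u n : ℝ) ≤ (n:ℝ)+1 := by linarith
        have := hlogL_ub n
        linarith [hlogL_ub n]
      · apply Tendsto.congr' _ tendsto_const_nhds
        filter_upwards [hev2] with n h
        simp [h]
    · intro n
      show L n ≤ |(u n : ℝ)| ^ (-τ + (if L n ≤ |(u n : ℝ)| ^ (-τ) then 0 else τ))
      by_cases h : L n ≤ |(u n : ℝ)| ^ (-τ)
      · rw [if_pos h, add_zero]
        exact h
      · rw [if_neg h, show -τ + τ = (0:ℝ) by ring, Real.rpow_zero]
        show L n ≤ 1
        linarith [hL2 n, hthalf n]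

lemma aux_TSet_bdd (ξ : ℝ) (hξ : Irrational ξ) (μ : ℝ) (Q₀ : ℕ)
    (hev : ∀ q : ℕ, Q₀ ≤ q → ∀ p : ℤ, |ξ - (p:ℝ)/(q:ℝ)| > 1/(q:ℝ)^μ) :
    ∀ τ ∈ TSet ξ, τ ≤ μ := by
  rintro τ ⟨hτ, u, v, hu0, hL0, -, δ2, hδ2, hineq⟩
  have hLt : Tendsto (fun n => |(u n:ℝ) * ξ - (v n:ℝ)|) atTop (𝓝 0) := by
    simpa using hL0.abs
  have hbig : ∀ᶠ n in atTop, (max (Q₀:ℤ) 2) ≤ |u n| :=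
    aux_abs_tendsto ξ hξ u v hu0 hLt _
  have key : ∀ᶠ n in atTop, τ - (μ - 1) < δ2 n := by
    filter_upwards [hbig] with n hn
    have hQ : (Q₀:ℤ) ≤ |u n| := le_trans (le_max_left _ _) hn
    have h2 : (2:ℤ) ≤ |u n| := le_trans (le_max_right _ _) hn
    have h2R : (2:ℝ) ≤ |(u n : ℝ)| := by
      rw [← Int.cast_abs]; exact_mod_cast h2
    set Q : ℕ := (u n).natAbs with hQdef
    have hQcast : ((Q:ℕ):ℝ) = |(u n : ℝ)| := by
      rw [hQdef, Nat.cast_natAbs]; push_cast; ring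
    have hQQ₀ : Q₀ ≤ Q := by
      have h9 : |u n| = (Q:ℤ) := Int.abs_eq_natAbs _
      omega
    obtain ⟨p, hp⟩ := aux_ratio (u n) (v n) (hu0 n)
    have h3 := hev Q hQQ₀ p
    have hune : (u n : ℝ) ≠ 0 := by
      intro h; exact hu0 n (by exact_mod_cast h)
    have habs : |(u n:ℝ)| ≠ 0 := by positivity
    have h4 : |ξ - (p:ℝ)/((Q:ℕ):ℝ)| = |(u n:ℝ) * ξ - (v n:ℝ)| / |(u n:ℝ)| := by
      rw [hp, show ξ - (v n:ℝ)/(u n:ℝ) = ((u n:ℝ)*ξ - (v n:ℝ))/(u n:ℝ) from by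
        rw [eq_div_iff hune, sub_mul, div_mul_cancel₀ _ hune]; ring, abs_div]
    rw [h4, hQcast] at h3
    -- L n > |u n| ^ (1 - μ)
    have h5 : |(u n:ℝ)| ^ ((1:ℝ) - μ) < |(u n:ℝ) * ξ - (v n:ℝ)| := by
      have h6 : |(u n:ℝ)| * (1/|(u n:ℝ)|^μ) < |(u n:ℝ)| * (|(u n:ℝ) * ξ - (v n:ℝ)| / |(u n:ℝ)|) :=
        mul_lt_mul_of_pos_left h3 (by positivity)
      rw [mul_div_cancel₀ _ habs] at h6
      calc |(u n:ℝ)| ^ ((1:ℝ) - μ) = |(u n:ℝ)| ^ (1:ℝ) * |(u n:ℝ)| ^ (-μ) := by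
            rw [← Real.rpow_add (by positivity)]; ring_nf
        _ = |(u n:ℝ)| * (1/|(u n:ℝ)|^μ) := by
            rw [Real.rpow_one, Real.rpow_neg (abs_nonneg _), one_div]
        _ < _ := h6
    have h7 : |(u n:ℝ)| ^ ((1:ℝ) - μ) < |(u n:ℝ)| ^ (-τ + δ2 n) :=
      lt_of_lt_of_le h5 (hineq n)
    have h8 : (1:ℝ) - μ < -τ + δ2 n :=
      (Real.rpow_lt_rpow_left_iff (by linarith : (1:ℝ) < |(u n:ℝ)|)).mp h7
    linarith
  have : τ - (μ - 1) ≤ 0 := ge_of_tendsto hδ2 (key.mono fun n h => h.le)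
  linarith

lemma aux_TSet_empty (ξ : ℝ) (hξ : Irrational ξ)
    (hLiou : ∀ μ : ℝ, ∃ᶠ q : ℕ in atTop, ∃ p : ℤ, ¬(|ξ - (p:ℝ)/(q:ℝ)| > 1/(q:ℝ)^μ)) :
    TSet ξ = ∅ := by
  classical
  rw [Set.eq_empty_iff_forall_notMem]
  rintro τ ⟨hτ, u, v, hu0, hL0, ⟨δ1, hδ1, hEq⟩, ⟨δ2, hδ2, hIneq⟩⟩
  set L : ℕ → ℝ := fun n => |(u n : ℝ) * ξ - (v n : ℝ)| with hLdef
  have hLpos : ∀ n, 0 < L n := fun n => aux_pos ξ hξ (hu0 n) (v n)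
  have hLt : Tendsto L atTop (𝓝 0) := by simpa [hLdef] using hL0.abs
  set ε : ℝ := min τ 1 / 2 with hεdef
  have hε0 : 0 < ε := by rw [hεdef]; positivity
  have hετ : ε < τ := by
    rw [hεdef]
    rcases le_total τ 1 with h | h
    · rw [min_eq_left h]; linarith
    · rw [min_eq_right h]; linarith
  have hε1 : ε ≤ 1/2 := by
    rw [hεdef]
    have : min τ 1 ≤ 1 := min_le_right _ _
    linarith
  have hτε : 0 < τ - ε := by linarith
  set K : ℝ := (1+ε)/(τ-ε) with hKdef
  have hK0 : 0 < K := by rw [hKdef]; positivity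
  set μ : ℝ := K + 3 with hμdef
  have h3K : (0:ℝ) < 3 ^ K := Real.rpow_pos_of_pos (by norm_num) K
  -- choose N
  have hbig2 : ∀ᶠ n in atTop, (2:ℤ) ≤ |u n| := aux_abs_tendsto ξ hξ u v hu0 hLt 2
  have hδ1' : ∀ᶠ n in atTop, |δ1 n| < ε := by
    have := hδ1.abs
    simp only [abs_zero] at this
    exact this.eventually (eventually_lt_nhds hε0)
  have hδ2' : ∀ᶠ n in atTop, |δ2 n| < ε := by
    have := hδ2.abs
    simp only [abs_zero] at this
    exact this.eventually (eventually_lt_nhds hε0)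
  have hL1' : ∀ᶠ n in atTop, L n < 1 :=
    hLt.eventually (eventually_lt_nhds (by norm_num : (0:ℝ) < 1))
  obtain ⟨N, hN⟩ := eventually_atTop.mp ((hδ1'.and hδ2').and (hL1'.and hbig2))
  -- eventual facts in q
  have hF2 : ∀ᶠ q : ℕ in atTop, 1/(3*(q:ℝ)) < L N := by
    have h1 : Tendsto (fun q : ℕ => 1/(3*(q:ℝ))) atTop (𝓝 0) :=
      tendsto_const_nhds.div_atTop
        (Tendsto.const_mul_atTop (by norm_num) tendsto_natCast_atTop_atTop)
    exact h1.eventually (eventually_lt_nhds (hLpos N))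
  have hF3 : ∀ᶠ q : ℕ in atTop, 3^K * (q:ℝ)^(-2:ℝ) < 1/3 := by
    have h1 : Tendsto (fun q : ℕ => 3^K * (q:ℝ)^(-2:ℝ)) atTop (𝓝 0) := by
      have h2 : Tendsto (fun q : ℕ => (q:ℝ)^(-2:ℝ)) atTop (𝓝 0) :=
        (tendsto_rpow_neg_atTop (by norm_num : (0:ℝ) < 2)).comp tendsto_natCast_atTop_atTop
      simpa using h2.const_mul (3^K)
    exact h1.eventually (eventually_lt_nhds (by norm_num))
  have hF4 : ∀ᶠ q : ℕ in atTop, 3^K * (q:ℝ)^(-1:ℝ) < 1/9 := by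
    have h1 : Tendsto (fun q : ℕ => 3^K * (q:ℝ)^(-1:ℝ)) atTop (𝓝 0) := by
      have h2 : Tendsto (fun q : ℕ => (q:ℝ)^(-1:ℝ)) atTop (𝓝 0) :=
        (tendsto_rpow_neg_atTop (by norm_num : (0:ℝ) < 1)).comp tendsto_natCast_atTop_atTop
      simpa using h2.const_mul (3^K)
    exact h1.eventually (eventually_lt_nhds (by norm_num))
  have hF1 : ∀ᶠ q : ℕ in atTop, 1 ≤ q := eventually_ge_atTop 1
  -- pick q
  obtain ⟨q, ⟨p, hpq⟩, ⟨⟨hq1, hq2⟩, ⟨hq3, hq4⟩⟩⟩ :=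
    ((hLiou μ).and_eventually ((hF1.and hF2).and (hF3.and hF4))).exists
  rw [not_lt] at hpq
  have hqR : (1:ℝ) ≤ (q:ℝ) := by exact_mod_cast hq1
  have hqpos : (0:ℝ) < (q:ℝ) := by linarith
  -- the index m
  have hex : ∃ k, L (N + k) ≤ 1/(3*(q:ℝ)) := by
    obtain ⟨M, hM⟩ := eventually_atTop.mp
      (hLt.eventually (eventually_lt_nhds (by positivity : (0:ℝ) < 1/(3*(q:ℝ)))))
    exact ⟨M + N, by simpa using (hM (N + (M+N)) (by omega)).le⟩
  set k₀ := Nat.find hex with hk₀def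
  have hk₀spec : L (N + k₀) ≤ 1/(3*(q:ℝ)) := Nat.find_spec hex
  have hk₀pos : 0 < k₀ := by
    rcases Nat.eq_zero_or_pos k₀ with h | h
    · exfalso
      rw [h] at hk₀spec
      simp only [Nat.add_zero] at hk₀spec
      linarith
    · exact h
  set n' := N + (k₀ - 1) with hn'def
  have hmn' : N + k₀ = n' + 1 := by omega
  have hn'N : N ≤ n' := by omega
  set m := n' + 1 with hmdef
  have hLm_le : L m ≤ 1/(3*(q:ℝ)) := by rwa [hmn'] at hk₀spec
  have hLn'_gt : 1/(3*(q:ℝ)) < L n' := by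
    have := Nat.find_min hex (show k₀ - 1 < k₀ by omega)
    rw [← hn'def] at this
    linarith [not_le.mp this]
  have hmN : N ≤ m := by omega
  obtain ⟨⟨hδ1n', _⟩, ⟨hLn'1, _⟩⟩ := hN n' hn'N
  obtain ⟨⟨_, hδ2m⟩, ⟨_, h2um⟩⟩ := hN m hmN
  have h2umR : (2:ℝ) ≤ |(u m : ℝ)| := by rw [← Int.cast_abs]; exact_mod_cast h2um
  -- lower bound for L m
  have hX1 : (1:ℝ) ≤ 3*(q:ℝ) := by linarith
  have hXpos : (0:ℝ) < 3*(q:ℝ) := by linarith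
  have hLm_gt : (3*(q:ℝ))^(-(1+ε)) < L m := by
    have step0 : (1/(3*(q:ℝ)))^(1+ε) = (3*(q:ℝ))^(-(1+ε)) := by
      rw [one_div, Real.inv_rpow hXpos.le, ← Real.rpow_neg hXpos.le]
    have step1 : L n' ^ (1+ε) ≤ L n' ^ (1 + δ1 n') :=
      Real.rpow_le_rpow_of_exponent_ge (hLpos n') hLn'1.le
        (by cases abs_le.mp hδ1n'.le; linarith)
    have step2 : (1/(3*(q:ℝ)))^(1+ε) < L n' ^ (1+ε) :=
      Real.rpow_lt_rpow (by positivity) hLn'_gt (by linarith)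
    have step3 : L m = L n' ^ (1 + δ1 n') := hEq n'
    rw [step3, ← step0]
    linarith
  have hLmpos := hLpos m
  -- upper bound for |u m|
  have hum_le : |(u m : ℝ)| ≤ (3*(q:ℝ)) ^ K := by
    have h1 : L m ≤ |(u m:ℝ)| ^ (-(τ-ε)) := by
      refine le_trans (hIneq m) (Real.rpow_le_rpow_of_exponent_le (by linarith) ?_)
      cases abs_le.mp hδ2m.le; linarith
    have h2 : (3*(q:ℝ))^(-(1+ε)) < |(u m:ℝ)| ^ (-(τ-ε)) := lt_of_lt_of_le hLm_gt h1
    have h3 : |(u m:ℝ)| ^ (τ-ε) < (3*(q:ℝ))^(1+ε) := by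
      have e1 : (3*(q:ℝ))^(-(1+ε)) = ((3*(q:ℝ))^(1+ε))⁻¹ := Real.rpow_neg hXpos.le _
      have e2 : |(u m:ℝ)| ^ (-(τ-ε)) = (|(u m:ℝ)| ^ (τ-ε))⁻¹ := Real.rpow_neg (abs_nonneg _) _
      rw [e1, e2] at h2
      have p1 : (0:ℝ) < (3*(q:ℝ))^(1+ε) := Real.rpow_pos_of_pos hXpos _
      have p2 : (0:ℝ) < |(u m:ℝ)| ^ (τ-ε) := Real.rpow_pos_of_pos (by linarith) _
      exact (inv_lt_inv₀ p1 p2).mp h2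
    have h4 : (3*(q:ℝ))^(1+ε) = ((3*(q:ℝ))^K)^(τ-ε) := by
      rw [← Real.rpow_mul hXpos.le]
      congr 1
      exact (div_mul_cancel₀ (1+ε) hτε.ne').symm
    rw [h4] at h3
    exact (Real.rpow_le_rpow_iff (abs_nonneg _) (Real.rpow_pos_of_pos hXpos K).le hτε).mp h3.le
  -- bound on |q ξ - p|
  have hqξp : |(q:ℝ)*ξ - (p:ℝ)| ≤ (q:ℝ)^(1-μ) := by
    have h1 : |(q:ℝ)*ξ - (p:ℝ)| = (q:ℝ) * |ξ - (p:ℝ)/(q:ℝ)| := by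
      have e0 : (q:ℝ) * (ξ - (p:ℝ)/(q:ℝ)) = (q:ℝ)*ξ - (p:ℝ) := by
        field_simp
      rw [← e0, abs_mul, abs_of_pos hqpos]
    rw [h1]
    calc (q:ℝ) * |ξ - (p:ℝ)/(q:ℝ)| ≤ (q:ℝ) * (1/(q:ℝ)^μ) :=
          mul_le_mul_of_nonneg_left hpq hqpos.le
      _ = (q:ℝ)^(1-μ) := by
          rw [Real.rpow_sub hqpos, Real.rpow_one, mul_one_div]
  -- key product bound
  have hprod : |(u m:ℝ)| * |(q:ℝ)*ξ - (p:ℝ)| ≤ 3^K * (q:ℝ)^(-2:ℝ) := by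
    calc |(u m:ℝ)| * |(q:ℝ)*ξ - (p:ℝ)| ≤ (3*(q:ℝ))^K * (q:ℝ)^(1-μ) := by
          apply mul_le_mul hum_le hqξp (abs_nonneg _) (Real.rpow_pos_of_pos hXpos K).le
      _ = 3^K * ((q:ℝ)^K * (q:ℝ)^(1-μ)) := by
          rw [Real.mul_rpow (by norm_num) hqpos.le]; ring
      _ = 3^K * (q:ℝ)^(-2:ℝ) := by
          rw [← Real.rpow_add hqpos]
          congr 1
          rw [hμdef]; ring
  -- the integer D
  set D : ℤ := u m * p - (q:ℤ) * v m with hDdef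
  have hDcast : (D:ℝ) = (u m:ℝ) * ((p:ℝ) - (q:ℝ)*ξ) + (q:ℝ) * ((u m:ℝ)*ξ - (v m:ℝ)) := by
    rw [hDdef]; push_cast; ring
  have hDbound : |(D:ℝ)| ≤ 2/3 := by
    rw [hDcast]
    calc |(u m:ℝ) * ((p:ℝ) - (q:ℝ)*ξ) + (q:ℝ) * ((u m:ℝ)*ξ - (v m:ℝ))|
        ≤ |(u m:ℝ) * ((p:ℝ) - (q:ℝ)*ξ)| + |(q:ℝ) * ((u m:ℝ)*ξ - (v m:ℝ))| := abs_add_le _ _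
      _ = |(u m:ℝ)| * |(q:ℝ)*ξ - (p:ℝ)| + (q:ℝ) * L m := by
          rw [abs_mul, abs_mul, abs_of_pos hqpos, abs_sub_comm ((p:ℝ)) ((q:ℝ)*ξ)]
      _ ≤ 3^K * (q:ℝ)^(-2:ℝ) + (q:ℝ) * (1/(3*(q:ℝ))) := by
          have := mul_le_mul_of_nonneg_left hLm_le hqpos.le
          linarith [hprod]
      _ ≤ 1/3 + 1/3 := by
          have : (q:ℝ) * (1/(3*(q:ℝ))) = 1/3 := by
            field_simp
          linarith [hq3]
      _ = 2/3 := by norm_num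
  have hD0 : D = 0 := by
    by_contra h
    have h1 : (1:ℤ) ≤ |D| := Int.one_le_abs h
    have h2 : (1:ℝ) ≤ |(D:ℝ)| := by rw [← Int.cast_abs]; exact_mod_cast h1
    linarith
  -- final contradiction
  have hfin : (q:ℝ) * L m = |(u m:ℝ)| * |(q:ℝ)*ξ - (p:ℝ)| := by
    have h1 : (u m:ℝ) * (p:ℝ) = (q:ℝ) * (v m:ℝ) := by
      have : (D:ℝ) = 0 := by rw [hD0]; norm_num
      rw [hDdef] at this
      push_cast at this
      linarith
    have h2 : (q:ℝ) * ((u m:ℝ)*ξ - (v m:ℝ)) = (u m:ℝ) * ((q:ℝ)*ξ - (p:ℝ)) := by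
      linear_combination h1
    calc (q:ℝ) * L m = |(q:ℝ) * ((u m:ℝ)*ξ - (v m:ℝ))| := by
          rw [abs_mul, abs_of_pos hqpos]
      _ = |(u m:ℝ) * ((q:ℝ)*ξ - (p:ℝ))| := by rw [h2]
      _ = |(u m:ℝ)| * |(q:ℝ)*ξ - (p:ℝ)| := abs_mul _ _
  have hLm_le2 : L m ≤ 3^K * (q:ℝ)^(-3:ℝ) := by
    have h1 : (q:ℝ) * L m ≤ 3^K * (q:ℝ)^(-2:ℝ) := by rw [hfin]; exact hprod
    have e1 : 3^K * (q:ℝ)^(-3:ℝ) * (q:ℝ) = 3^K * (q:ℝ)^(-2:ℝ) := by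
      rw [mul_assoc, ← Real.rpow_add_one hqpos.ne' (-3)]
      norm_num
    rw [← e1] at h1
    have := le_of_mul_le_mul_right (by linarith : L m * (q:ℝ) ≤ 3^K * (q:ℝ)^(-3:ℝ) * (q:ℝ)) hqpos
    linarith
  have hchain : 3^K * (q:ℝ)^(-3:ℝ) < (3*(q:ℝ))^(-(1+ε)) := by
    have e2 : 3^K * (q:ℝ)^(-3:ℝ) = (3^K * (q:ℝ)^(-1:ℝ)) * (q:ℝ)^(-2:ℝ) := by
      rw [mul_assoc, ← Real.rpow_add hqpos]; norm_num
    have e3 : (3*(q:ℝ))^(-2:ℝ) = (3:ℝ)^(-2:ℝ) * (q:ℝ)^(-2:ℝ) :=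
      Real.mul_rpow (by norm_num) hqpos.le
    have e4 : (3:ℝ)^(-2:ℝ) = 1/9 := by
      rw [show (-2:ℝ) = ((-2:ℤ):ℝ) by norm_num, Real.rpow_intCast]
      norm_num
    have h5 : (3*(q:ℝ))^(-2:ℝ) ≤ (3*(q:ℝ))^(-(1+ε)) :=
      Real.rpow_le_rpow_of_exponent_le hX1 (by linarith)
    have hq2pos : (0:ℝ) < (q:ℝ)^(-2:ℝ) := Real.rpow_pos_of_pos hqpos _
    calc 3^K * (q:ℝ)^(-3:ℝ) = (3^K * (q:ℝ)^(-1:ℝ)) * (q:ℝ)^(-2:ℝ) := e2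
      _ < (1/9) * (q:ℝ)^(-2:ℝ) := mul_lt_mul_of_pos_right hq4 hq2pos
      _ = (3*(q:ℝ))^(-2:ℝ) := by rw [e3, e4]
      _ ≤ _ := h5
  linarith [hLm_gt, hLm_le2, hchain]

theorem tau_eq_zero_iff_liouville (ξ : ℝ) (hξ : Irrational ξ) :
    tauExp ξ = 0 ↔ irrationalityExponent ξ = ⊤ := by
  constructor
  · intro h0
    by_contra hne
    have hS : {x : EReal | ∃ μ : ℝ, x = (μ : EReal) ∧
        ∀ᶠ q : ℕ in atTop, ∀ p : ℤ, |ξ - (p : ℝ) / (q : ℝ)| > 1 / (q : ℝ) ^ μ}.Nonempty := by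
      by_contra hemp
      rw [Set.not_nonempty_iff_eq_empty] at hemp
      apply hne
      show sInf _ = ⊤
      rw [hemp]
      exact sInf_empty
    obtain ⟨x, μ, rfl, hevμ⟩ := hS
    set μ' : ℝ := max μ 2 with hμ'def
    have hμ'2 : (2:ℝ) ≤ μ' := le_max_right _ _
    have hev' : ∀ᶠ q : ℕ in atTop, ∀ p : ℤ, |ξ - (p:ℝ)/(q:ℝ)| > 1/(q:ℝ)^μ' := by
      filter_upwards [hevμ, eventually_ge_atTop 1] with q hq hq1
      intro p
      refine lt_of_le_of_lt ?_ (hq p)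
      have hq1R : (1:ℝ) ≤ (q:ℝ) := by exact_mod_cast hq1
      have h1 : (q:ℝ)^μ ≤ (q:ℝ)^μ' :=
        Real.rpow_le_rpow_of_exponent_le hq1R (le_max_left _ _)
      have h2 : (0:ℝ) < (q:ℝ)^μ := Real.rpow_pos_of_pos (by linarith) _
      exact one_div_le_one_div_of_le h2 h1
    obtain ⟨Q₀, hQ₀⟩ := eventually_atTop.mp hev'
    have hmem := aux_mem_TSet ξ hξ μ' hμ'2 Q₀ hQ₀
    have hbdd : BddAbove (TSet ξ) := ⟨μ', fun τ hτ => aux_TSet_bdd ξ hξ μ' Q₀ hQ₀ τ hτ⟩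
    have h1 : (1/(2*(μ'-1))) ≤ tauExp ξ := le_csSup hbdd hmem
    have h2 : (0:ℝ) < 1/(2*(μ'-1)) := by
      apply div_pos one_pos
      linarith
    rw [h0] at h1
    linarith
  · intro htop
    have hLiou : ∀ μ : ℝ, ∃ᶠ q : ℕ in atTop, ∃ p : ℤ,
        ¬(|ξ - (p:ℝ)/(q:ℝ)| > 1/(q:ℝ)^μ) := by
      intro μ
      by_contra hcon
      rw [not_frequently] at hcon
      have hcon' : ∀ᶠ q : ℕ in atTop, ∀ p : ℤ, |ξ - (p:ℝ)/(q:ℝ)| > 1/(q:ℝ)^μ := by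
        filter_upwards [hcon] with q hq
        intro p
        by_contra h
        exact hq ⟨p, h⟩
      have hx : ((μ:ℝ):EReal) ∈ {x : EReal | ∃ μ : ℝ, x = (μ : EReal) ∧
          ∀ᶠ q : ℕ in atTop, ∀ p : ℤ, |ξ - (p : ℝ) / (q : ℝ)| > 1 / (q : ℝ) ^ μ} :=
        ⟨μ, rfl, hcon'⟩
      have hle : irrationalityExponent ξ ≤ ((μ:ℝ):EReal) := sInf_le hx
      rw [htop] at hle
      exact absurd (top_le_iff.mp hle) (EReal.coe_ne_top μ)
    rw [show tauExp ξ = sSup (TSet ξ) from rfl, aux_TSet_empty ξ hξ hLiou, Real.sSup_empty]
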